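/- Let b ≥ 2, n ≥ 1, d ≥ 2 be integers with gcd(n, d) = g, and let M = (b^g - 1)/(b - 1). Then (b^{nd}-1)/(b^n-1) ≡ d (mod M) and (b^{nd}-1)/(b^d-1) ≡ n (mod M). -/
import Mathlib

lemma aux_geom_14 (x k : ℕ) (hx : 1 ≤ x) :
    x ^ k - 1 = (x - 1) * ∑ i ∈ Finset.range k, x ^ i := by
  have h1 : 1 ≤ x ^ k := Nat.one_le_pow _ _ hx
  zify [hx, h1]
  rw [mul_comm]
  exact (geom_sum_mul (x : ℤ) k).symm

lemma modEq_sum_14 {M : ℕ} (f g : ℕ → ℕ) (s : Finset ℕ)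
    (h : ∀ i ∈ s, f i ≡ g i [MOD M]) :
    ∑ i ∈ s, f i ≡ ∑ i ∈ s, g i [MOD M] := by
  classical
  induction s using Finset.induction with
  | empty => rfl
  | @insert a s ha ih =>
    rw [Finset.sum_insert ha, Finset.sum_insert ha]
    exact (h a (Finset.mem_insert_self a s)).add
      (ih fun i hi => h i (Finset.mem_insert_of_mem hi))

lemma key_14 (b m c : ℕ) (hb : 2 ≤ b) (hm : 1 ≤ m) (g : ℕ) (hg : g ∣ m) :
    (b ^ (m * c) - 1) / (b ^ m - 1) ≡ c [MOD (b ^ g - 1) / (b - 1)] := by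
  set M := (b ^ g - 1) / (b - 1) with hM
  have hb1 : (b : ℕ) - 1 ∣ b ^ g - 1 := by
    simpa using Nat.sub_dvd_pow_sub_pow b 1 g
  have hMdvd : M ∣ b ^ g - 1 := ⟨b - 1, (Nat.div_mul_cancel hb1).symm⟩
  have hgm : b ^ g - 1 ∣ b ^ m - 1 := by
    obtain ⟨t, rfl⟩ := hg
    simpa [pow_mul] using Nat.sub_dvd_pow_sub_pow (b ^ g) 1 t
  have hbm : 2 ≤ b ^ m := by
    calc 2 ≤ b := hb
    _ = b ^ 1 := (pow_one b).symm
    _ ≤ b ^ m := Nat.pow_le_pow_right (by omega) hm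
  have hmod : (b ^ m) ≡ 1 [MOD M] :=
    ((Nat.modEq_iff_dvd' (by omega)).mpr (hMdvd.trans hgm)).symm
  have hdiv : (b ^ (m * c) - 1) / (b ^ m - 1) = ∑ i ∈ Finset.range c, (b ^ m) ^ i := by
    rw [pow_mul, aux_geom_14 (b ^ m) c (by omega),
      Nat.mul_div_cancel_left _ (by omega : 0 < b ^ m - 1)]
  rw [hdiv]
  calc ∑ i ∈ Finset.range c, (b ^ m) ^ i
      ≡ ∑ i ∈ Finset.range c, 1 [MOD M] := by
        apply modEq_sum_14
        intro i _
        simpa using hmod.pow i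
    _ = c := by simp

theorem stmt_14 (b n d : ℕ) (hb : 2 ≤ b) (hn : 1 ≤ n) (hd : 2 ≤ d) :
    (b ^ (n * d) - 1) / (b ^ n - 1) ≡ d [MOD (b ^ Nat.gcd n d - 1) / (b - 1)] ∧
      (b ^ (n * d) - 1) / (b ^ d - 1) ≡ n [MOD (b ^ Nat.gcd n d - 1) / (b - 1)] := by
  constructor
  · exact key_14 b n d hb hn _ (Nat.gcd_dvd_left n d)
  · rw [mul_comm]
    exact key_14 b d n hb (by omega) _ (Nat.gcd_dvd_right n d)
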